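/- Let T be a tournament on {1,…,n}, i.e., for each pair i < j exactly one of the directed edges i→j, j→i belongs to T. The set of points x ∈ ℝⁿ with x₁ + ⋯ + x_n = 0 satisfying x_i − x_j > 1 for every edge i→j of T with i < j and x_i − x_j < 1 for every edge j→i of T with i < j (this set is a region of the Linial arrangement when nonempty) is nonempty and bounded if and only if T is semiacyclic and strongly connected. -/

import Mathlib

/-- Cyclically consecutive pairs along a list of vertices. -/
def cpairs {n : ℕ} (c : List (Fin n)) : List (Fin n × Fin n) := c.zip (c.rotate 1)

/-- `c` is a directed cycle of the digraph `T`. -/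
def IsCycleT {n : ℕ} (T : Fin n → Fin n → Prop) (c : List (Fin n)) : Prop :=
  2 ≤ c.length ∧ c.Nodup ∧ ∀ p ∈ cpairs c, T p.1 p.2

/-- A tournament is semiacyclic if every directed cycle contains strictly
fewer ascents (edges `u → v` with `u < v`) than descents (edges `u → v` with
`u > v`). -/
def Semiacyclic {n : ℕ} (T : Fin n → Fin n → Prop) : Prop :=
  ∀ c : List (Fin n), IsCycleT T c →
    (cpairs c).countP (fun p => decide (p.1 < p.2)) <
      (cpairs c).countP (fun p => decide (p.2 < p.1))

namespace StmtAux

variable {n : ℕ}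

/-- weight of a path -/
def wt (ℓ : Fin n → Fin n → ℝ) : List (Fin n) → ℝ
  | a :: b :: t => ℓ a b + wt ℓ (b :: t)
  | _ => 0

@[simp] lemma wt_nil (ℓ : Fin n → Fin n → ℝ) : wt ℓ [] = 0 := by simp [wt]
@[simp] lemma wt_single (ℓ : Fin n → Fin n → ℝ) (a : Fin n) : wt ℓ [a] = 0 := by simp [wt]
@[simp] lemma wt_cons₂ (ℓ : Fin n → Fin n → ℝ) (a b : Fin n) (t : List (Fin n)) :
    wt ℓ (a :: b :: t) = ℓ a b + wt ℓ (b :: t) := by simp [wt]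

lemma cpairs_cons (a : Fin n) (t : List (Fin n)) :
    cpairs (a :: t) = (a :: t).zip (t ++ [a]) := by
  simp [cpairs, List.rotate_cons_succ]

lemma zip_sum_eq (ℓ : Fin n → Fin n → ℝ) :
    ∀ (t : List (Fin n)) (a v : Fin n),
      (((a :: t).zip (t ++ [v])).map (fun p => ℓ p.1 p.2)).sum
        = wt ℓ (a :: t) + ℓ ((a :: t).getLast (List.cons_ne_nil _ _)) v := by
  intro t
  induction t with
  | nil => intro a v; simp
  | cons b t ih =>
      intro a v
      simp only [List.cons_append, List.zip_cons_cons, List.map_cons, List.sum_cons,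
        wt_cons₂, List.getLast_cons_cons]
      rw [ih b v]
      ring

lemma zip_chain (T : Fin n → Fin n → Prop) :
    ∀ (t : List (Fin n)) (a v : Fin n), List.Chain' T (a :: t) →
      T ((a :: t).getLast (List.cons_ne_nil _ _)) v →
      ∀ p ∈ (a :: t).zip (t ++ [v]), T p.1 p.2 := by
  intro t
  induction t with
  | nil =>
      intro a v _ hlast p hp
      simp at hp
      subst hp; simpa using hlast
  | cons b t ih =>
      intro a v hchain hlast p hp
      simp only [List.cons_append, List.zip_cons_cons, List.mem_cons] at hp
      rcases hp with rfl | hp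
      · exact (List.isChain_cons_cons.mp hchain).1
      · exact ih b v (List.isChain_cons_cons.mp hchain).2 (by simpa using hlast) p hp

lemma wt_append_cons (ℓ : Fin n → Fin n → ℝ) :
    ∀ (s : List (Fin n)) (x : Fin n) (t : List (Fin n)),
      wt ℓ (s ++ x :: t) = wt ℓ (s ++ [x]) + wt ℓ (x :: t) := by
  intro s
  induction s with
  | nil => intro x t; simp
  | cons a s ih =>
      intro x t
      cases s with
      | nil => simp [wt_cons₂]
      | cons b s =>
          simp only [List.cons_append, wt_cons₂] at *
          rw [ih x t]; ring

lemma wt_append_single (ℓ : Fin n → Fin n → ℝ) :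
    ∀ (s : List (Fin n)) (h : s ≠ []) (v : Fin n),
      wt ℓ (s ++ [v]) = wt ℓ s + ℓ (s.getLast h) v := by
  intro s
  induction s with
  | nil => intro h; simp at h
  | cons a s ih =>
      intro _ v
      cases s with
      | nil => simp
      | cons b s =>
          have := ih (List.cons_ne_nil _ _) v
          simp only [List.cons_append, wt_cons₂, List.getLast_cons_cons] at this ⊢
          rw [this]; ring

end StmtAux

namespace StmtAux

variable {n : ℕ}

lemma sum_if (r s : ℝ) : ∀ L : List (Fin n × Fin n),
    (L.map (fun p => if p.1 < p.2 then r else s)).sum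
      = (L.countP (fun p => decide (p.1 < p.2)) : ℝ) * r
        + (L.countP (fun p => !decide (p.1 < p.2)) : ℝ) * s := by
  intro L
  induction L with
  | nil => simp
  | cons a L ih =>
      by_cases h : a.1 < a.2 <;>
        · simp [List.countP_cons, h, ih]; push_cast; ring

lemma sum_le_sum' (f g : Fin n × Fin n → ℝ) : ∀ L : List (Fin n × Fin n),
    (∀ p ∈ L, g p ≤ f p) → (L.map g).sum ≤ (L.map f).sum := by
  intro L
  induction L with
  | nil => simp
  | cons a L ih =>
      intro h
      simp only [List.map_cons, List.sum_cons]
      exact add_le_add (h a (by simp)) (ih fun p hp => h p (by simp [hp]))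

lemma sum_lt_sum (f g : Fin n × Fin n → ℝ) : ∀ L : List (Fin n × Fin n), L ≠ [] →
    (∀ p ∈ L, g p < f p) → (L.map g).sum < (L.map f).sum := by
  intro L
  induction L with
  | nil => intro h; exact absurd rfl h
  | cons a L _ =>
      intro _ h
      simp only [List.map_cons, List.sum_cons]
      exact add_lt_add_of_lt_of_le (h a (by simp))
        (sum_le_sum' f g L fun p hp => le_of_lt (h p (by simp [hp])))

end StmtAux

namespace StmtAux

variable {n : ℕ}

lemma cycle_pos (T : Fin n → Fin n → Prop) (hsemi : Semiacyclic T)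
    (hTirr : ∀ i : Fin n, ¬ T i i)
    (ε : ℝ) (hε : 0 < ε) (hnε : (n : ℝ) * ε < 1)
    (c : List (Fin n)) (hc : IsCycleT T c) :
    0 < ((cpairs c).map
      (fun p => if p.1 < p.2 then (-1 - ε) else (1 - ε))).sum := by
  obtain ⟨hlen2, hnd, hTc⟩ := hc
  have hA := hsemi c ⟨hlen2, hnd, hTc⟩
  set L := cpairs c with hL
  have hQd : L.countP (fun p => !decide (p.1 < p.2))
      = L.countP (fun p => decide (p.2 < p.1)) := by
    apply List.countP_congr
    intro p hp
    have hne : p.1 ≠ p.2 := by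
      intro h
      have := hTc p hp
      rw [h] at this
      exact hTirr _ this
    rcases lt_or_gt_of_ne hne with h | h <;> simp [h, not_lt_of_gt, le_of_lt]
  have hsum : L.length = L.countP (fun p => decide (p.1 < p.2))
      + L.countP (fun p => !decide (p.1 < p.2)) := by
    rw [List.length_eq_countP_add_countP (fun p : Fin n × Fin n => decide (p.1 < p.2)) (l := L)]
    congr 1
    apply List.countP_congr
    intro p hp
    simp
  have hLlen : L.length ≤ n := by
    have h1 : L.length ≤ c.length := by
      rw [hL, cpairs]; simp
    exact h1.trans (by simpa using hnd.length_le_card)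
  rw [sum_if]
  set A := L.countP (fun p => decide (p.1 < p.2)) with hAdef
  set Q := L.countP (fun p => !decide (p.1 < p.2)) with hQdef
  have h1 : (A : ℝ) + 1 ≤ Q := by
    have h0 : A < Q := hQd ▸ hA
    have : A + 1 ≤ Q := h0
    exact_mod_cast this
  have h2 : (A : ℝ) + Q ≤ n := by
    have : A + Q ≤ n := hsum ▸ hLlen
    exact_mod_cast this
  nlinarith [hε.le, mul_le_mul_of_nonneg_right h2 hε.le]

end StmtAux

namespace StmtAux

theorem feasible {n : ℕ} (T : Fin n → Fin n → Prop)
    (hTirr : ∀ i : Fin n, ¬ T i i)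
    (hsemi : Semiacyclic T) :
    ∃ x : Fin n → ℝ, (∑ i, x i) = 0 ∧
      ∀ i j : Fin n, i < j → (T i j → 1 < x i - x j) ∧ (T j i → x i - x j < 1) := by
  rcases Nat.eq_zero_or_pos n with hn | hn
  · subst hn; exact ⟨0, by simp, fun i => i.elim0⟩
  set ε : ℝ := 1 / (n + 1) with hεdef
  have hε : 0 < ε := by positivity
  have hnε : (n : ℝ) * ε < 1 := by
    rw [hεdef, mul_one_div, div_lt_one (by positivity)]
    linarith
  set ℓ : Fin n → Fin n → ℝ := fun u v => if u < v then (-1 - ε) else (1 - ε) with hℓdef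
  set P : Fin n → Set (List (Fin n)) := fun v =>
    {p | p ≠ [] ∧ p.Nodup ∧ p.Chain' T ∧ p.getLast? = some v} with hPdef
  have hPfin : ∀ v, (P v).Finite := by
    intro v
    apply Set.Finite.subset (List.finite_length_le (Fin n) n)
    intro p hp
    exact (hp.2.1.length_le_card).trans_eq (by simp)
  have hPne : ∀ v, (P v).Nonempty := fun v => ⟨[v], by simp [hPdef]; exact List.isChain_singleton v⟩
  have hmin : ∀ v, ∃ p ∈ P v, ∀ q ∈ P v, wt ℓ p ≤ wt ℓ q :=
    fun v => Set.exists_min_image (P v) (wt ℓ) (hPfin v) (hPne v)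
  choose pmin hpmem hpmin using hmin
  set y : Fin n → ℝ := fun v => wt ℓ (pmin v) with hydef
  have hedge : ∀ u v, T u v → y v ≤ y u + ℓ u v := by
    intro u v huv
    have hune : u ≠ v := by rintro rfl; exact hTirr u huv
    obtain ⟨hne, hnd, hch, hlast⟩ := hpmem u
    by_cases hv : v ∈ pmin u
    · obtain ⟨s, t, hst⟩ := List.append_of_mem hv
      have hq : (s ++ [v]) ∈ P v := by
        refine ⟨by simp, ?_, ?_, List.getLast?_concat⟩
        · have hsub : (s ++ [v]).Sublist (pmin u) := by
            rw [hst]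
            apply List.Sublist.append_left
            simpa using List.sublist_append_left [v] t
          exact hnd.sublist hsub
        · exact hch.prefix ⟨t, by rw [hst]; simp⟩
      have h1 : y v ≤ wt ℓ (s ++ [v]) := hpmin v _ hq
      have hlastvt : (v :: t).getLast (List.cons_ne_nil _ _) = u := by
        rw [hst, List.getLast?_append,
          List.getLast?_eq_getLast (l := v :: t) (List.cons_ne_nil _ _)] at hlast
        simpa using hlast
      have htne : t ≠ [] := by
        rintro rfl
        exact hune (by simpa using hlastvt.symm)
      have hcyc : IsCycleT T (v :: t) := by
        refine ⟨?_, ?_, ?_⟩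
        · cases t with
          | nil => exact absurd rfl htne
          | cons a t => simp
        · have : (v :: t).Sublist (pmin u) := by rw [hst]; simp
          exact hnd.sublist this
        · rw [cpairs_cons]
          apply zip_chain T t v v
          · exact hch.suffix ⟨s, hst.symm⟩
          · rw [hlastvt]; exact huv
      have hpos := cycle_pos T hsemi hTirr ε hε hnε (v :: t) hcyc
      rw [cpairs_cons, zip_sum_eq ℓ t v v, hlastvt] at hpos
      have hsplit : wt ℓ (pmin u) = wt ℓ (s ++ [v]) + wt ℓ (v :: t) := by
        rw [hst]; exact wt_append_cons ℓ s v t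
      show y v ≤ wt ℓ (pmin u) + ℓ u v
      rw [hsplit]
      linarith
    · have hq : (pmin u ++ [v]) ∈ P v := by
        refine ⟨by simp, ?_, ?_, List.getLast?_concat⟩
        · simp [List.nodup_append, hnd, hv]; rintro a ha rfl; exact hv ha
        · refine List.isChain_append.mpr ?_
          refine ⟨hch, List.isChain_singleton v, ?_⟩
          intro x hx y' hy'
          simp at hy'
          rw [hlast] at hx
          simp at hx
          rw [← hx, ← hy']
          exact huv
      have h1 : y v ≤ wt ℓ (pmin u ++ [v]) := hpmin v _ hq
      have h2 : wt ℓ (pmin u ++ [v]) = wt ℓ (pmin u) + ℓ ((pmin u).getLast hne) v :=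
        wt_append_single ℓ (pmin u) hne v
      have h3 : (pmin u).getLast hne = u := by
        have := List.getLast?_eq_getLast (l := pmin u) hne
        rw [hlast] at this
        exact (Option.some_injective _ this.symm)
      rw [h2, h3] at h1
      exact h1
  refine ⟨fun i => y i - (∑ j, y j) / n, ?_, ?_⟩
  · rw [Finset.sum_sub_distrib]
    simp only [Finset.sum_const, Finset.card_univ, Fintype.card_fin, nsmul_eq_mul]
    field_simp
    ring
  · intro i j hij
    constructor
    · intro hTij
      have := hedge i j hTij
      rw [hℓdef] at this
      simp only [hij, if_pos] at this
      have h5 : y j ≤ y i + (-1 - ε) := this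
      dsimp only
      linarith
    · intro hTji
      have := hedge j i hTji
      rw [hℓdef] at this
      have hnlt : ¬ (j < i) := not_lt_of_gt hij
      simp only [hnlt, if_neg, if_false] at this
      have h5 : y i ≤ y j + (1 - ε) := this
      dsimp only
      linarith

end StmtAux

namespace StmtAux

variable {n : ℕ}

lemma sum_zip_sub (x : Fin n → ℝ) : ∀ (l l' : List (Fin n)), l.length = l'.length →
    ((l.zip l').map (fun p => x p.1 - x p.2)).sum = (l.map x).sum - (l'.map x).sum := by
  intro l
  induction l with
  | nil =>
      intro l' h
      have : l' = [] := List.length_eq_zero_iff.mp h.symm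
      subst this; simp
  | cons a l ih =>
      intro l' h
      cases l' with
      | nil => simp at h
      | cons b l' =>
          simp only [List.zip_cons_cons, List.map_cons, List.sum_cons]
          rw [ih l' (by simpa using h)]
          ring

lemma cpairs_sum_zero (x : Fin n → ℝ) (c : List (Fin n)) :
    ((cpairs c).map (fun p => x p.1 - x p.2)).sum = 0 := by
  rw [cpairs, sum_zip_sub x c (c.rotate 1) (by simp)]
  rw [List.Perm.sum_eq ((c.rotate_perm 1).map x)]
  ring

lemma semiacyclic_of_mem (T : Fin n → Fin n → Prop) (hTirr : ∀ i : Fin n, ¬ T i i)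
    (x : Fin n → ℝ)
    (hx : ∀ i j : Fin n, i < j → (T i j → 1 < x i - x j) ∧ (T j i → x i - x j < 1)) :
    Semiacyclic T := by
  intro c hc
  obtain ⟨hlen2, hnd, hTc⟩ := hc
  have hne : cpairs c ≠ [] := by
    have : (cpairs c).length = c.length := by rw [cpairs]; simp
    intro h
    rw [h] at this
    simp at this
    omega
  have hlt : ∀ p ∈ cpairs c,
      (fun p : Fin n × Fin n => if p.1 < p.2 then (1:ℝ) else -1) p < x p.1 - x p.2 := by
    intro p hp
    have hT := hTc p hp
    have hpne : p.1 ≠ p.2 := by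
      intro h; rw [h] at hT; exact hTirr _ hT
    rcases lt_or_gt_of_ne hpne with h | h
    · simpa [h] using (hx p.1 p.2 h).1 hT
    · have := (hx p.2 p.1 h).2 hT
      simp [not_lt_of_gt h]
      linarith
  have hsum := sum_lt_sum (fun p => x p.1 - x p.2)
    (fun p : Fin n × Fin n => if p.1 < p.2 then (1:ℝ) else -1) (cpairs c) hne hlt
  rw [cpairs_sum_zero x c, sum_if] at hsum
  have hQd : (cpairs c).countP (fun p => !decide (p.1 < p.2))
      = (cpairs c).countP (fun p => decide (p.2 < p.1)) := by
    apply List.countP_congr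
    intro p hp
    have hT := hTc p hp
    have hpne : p.1 ≠ p.2 := by
      intro h; rw [h] at hT; exact hTirr _ hT
    rcases lt_or_gt_of_ne hpne with h | h <;> simp [h, not_lt_of_gt, le_of_lt]
  rw [hQd] at hsum
  have : ((cpairs c).countP (fun p => decide (p.1 < p.2)) : ℝ)
      < (cpairs c).countP (fun p => decide (p.2 < p.1)) := by linarith
  exact_mod_cast this

lemma chain_bound (T : Fin n → Fin n → Prop) (x : Fin n → ℝ)
    (hstep : ∀ a b : Fin n, T a b → x b < x a + 1) :
    ∀ (l : List (Fin n)) (u : Fin n), List.Chain T u l →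
      x ((u :: l).getLast (List.cons_ne_nil _ _)) ≤ x u + l.length := by
  intro l
  induction l with
  | nil => intro u _; simp
  | cons w l ih =>
      intro u hch
      replace hch := List.isChain_cons_cons.mp hch
      have h1 := ih w hch.2
      have h2 := hstep u w hch.1
      rw [List.getLast_cons_cons]
      simp only [List.length_cons]
      push_cast
      calc x ((w :: l).getLast (List.cons_ne_nil _ _)) ≤ x w + l.length := h1
    _ ≤ x u + 1 + l.length := by linarith
    _ = x u + (l.length + 1) := by ring

end StmtAux

theorem stmt2 (n : ℕ) (T : Fin n → Fin n → Prop)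
    (hT : ∀ i j : Fin n, i ≠ j → (T i j ↔ ¬ T j i)) (hTirr : ∀ i : Fin n, ¬ T i i)
    (S : Set (Fin n → ℝ))
    (hS : S = {x : Fin n → ℝ | (∑ i, x i) = 0 ∧
      ∀ i j : Fin n, i < j → (T i j → 1 < x i - x j) ∧ (T j i → x i - x j < 1)}) :
    (S.Nonempty ∧ Bornology.IsBounded S) ↔
      (Semiacyclic T ∧ ∀ u v : Fin n, Relation.ReflTransGen T u v) := by

  classical
  constructor
  · rintro ⟨⟨x, hxS⟩, hbd⟩
    rw [hS] at hxS
    obtain ⟨hx0, hxc⟩ := hxS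
    refine ⟨StmtAux.semiacyclic_of_mem T hTirr x hxc, ?_⟩
    by_contra hcon
    push_neg at hcon
    obtain ⟨u, v, hnr⟩ := hcon
    set A : Finset (Fin n) := Finset.univ.filter (fun w => Relation.ReflTransGen T u w)
      with hAdef
    have huA : u ∈ A := by
      simp only [hAdef, Finset.mem_filter, Finset.mem_univ, true_and]
      exact Relation.ReflTransGen.refl
    have hvA : v ∉ A := by simp [hAdef, hnr]
    set a : ℕ := A.card with hadef
    set b : ℕ := Aᶜ.card with hbdef
    have ha : 1 ≤ a := Finset.card_pos.mpr ⟨u, huA⟩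
    have hb : 1 ≤ b := Finset.card_pos.mpr ⟨v, Finset.mem_compl.mpr hvA⟩
    set χ : Fin n → ℝ := fun i => if i ∈ A then -(b:ℝ) else (a:ℝ) with hχdef
    have hχsum : (∑ i, χ i) = 0 := by
      rw [← Finset.sum_add_sum_compl A χ]
      have h1 : ∑ i ∈ A, χ i = (a:ℝ) * (-(b:ℝ)) := by
        rw [Finset.sum_congr rfl (fun i hi => show χ i = -(b:ℝ) by simp [hχdef, hi])]
        rw [Finset.sum_const, ← hadef]
        simp [mul_comm]
      have h2 : ∑ i ∈ Aᶜ, χ i = (b:ℝ) * (a:ℝ) := by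
        rw [Finset.sum_congr rfl
          (fun i hi => show χ i = (a:ℝ) by simp [hχdef, Finset.mem_compl.mp hi])]
        rw [Finset.sum_const, ← hbdef]
        simp [mul_comm]
      rw [h1, h2]; ring
    have hedgeAB : ∀ i ∈ A, ∀ j, j ∉ A → ¬ T i j := by
      intro i hi j hj hTij
      apply hj
      simp only [hAdef, Finset.mem_filter, Finset.mem_univ, true_and] at hi ⊢
      exact hi.tail hTij
    have h0a : (0:ℝ) ≤ a := Nat.cast_nonneg a
    have h0b : (0:ℝ) ≤ b := Nat.cast_nonneg b
    have hyS : ∀ t : ℝ, 0 ≤ t → (fun i => x i + t * χ i) ∈ S := by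
      intro t ht
      rw [hS]
      refine ⟨?_, ?_⟩
      · rw [Finset.sum_add_distrib, hx0, ← Finset.mul_sum, hχsum]; ring
      · intro i j hij
        by_cases hiA : i ∈ A <;> by_cases hjA : j ∈ A
        · have hχeq : χ i = χ j := by simp [hχdef, hiA, hjA]
          have h1 := hxc i j hij
          constructor
          · intro hTij; have := h1.1 hTij; dsimp only; rw [hχeq]; linarith
          · intro hTji; have := h1.2 hTji; dsimp only; rw [hχeq]; linarith
        · -- i ∈ A, j ∉ A : all edges go from outside into A
          constructor
          · intro hTij; exact absurd hTij (hedgeAB i hiA j hjA)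
          · intro hTji
            have h1 := (hxc i j hij).2 hTji
            have hχi : χ i = -(b:ℝ) := by simp [hχdef, hiA]
            have hχj : χ j = (a:ℝ) := by simp [hχdef, hjA]
            dsimp only; rw [hχi, hχj]
            nlinarith
        · -- i ∉ A, j ∈ A
          constructor
          · intro hTij
            have h1 := (hxc i j hij).1 hTij
            have hχi : χ i = (a:ℝ) := by simp [hχdef, hiA]
            have hχj : χ j = -(b:ℝ) := by simp [hχdef, hjA]
            dsimp only; rw [hχi, hχj]
            nlinarith
          · intro hTji; exact absurd hTji (hedgeAB j hjA i hiA)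
        · have hχeq : χ i = χ j := by simp [hχdef, hiA, hjA]
          have h1 := hxc i j hij
          constructor
          · intro hTij; have := h1.1 hTij; dsimp only; rw [hχeq]; linarith
          · intro hTji; have := h1.2 hTji; dsimp only; rw [hχeq]; linarith
    rw [Metric.isBounded_iff_subset_closedBall 0] at hbd
    obtain ⟨r, hr⟩ := hbd
    set t : ℝ := |x u| + |r| + 1 with htdef
    have ht : 0 ≤ t := by positivity
    have hmem := hr (hyS t ht)
    have hdist : dist ((fun i => x i + t * χ i) u) ((0 : Fin n → ℝ) u) ≤ r :=
      le_trans (dist_le_pi_dist (fun i => x i + t * χ i) 0 u)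
        (by simpa [Metric.mem_closedBall] using hmem)
    have habs : |x u + t * χ u| ≤ r := by simpa [Real.dist_eq] using hdist
    have hχu : χ u = -(b:ℝ) := by simp [hχdef, huA]
    rw [hχu] at habs
    have habs' := (abs_le.mp habs).1
    have hb1 : (1:ℝ) ≤ b := by exact_mod_cast hb
    have h1 : t ≤ t * (b:ℝ) := by nlinarith [hb1, ht]
    have h2 := le_abs_self (x u)
    have h3 := le_abs_self r
    nlinarith
  · rintro ⟨hsemi, hconn⟩
    obtain ⟨x, hx0, hxc⟩ := StmtAux.feasible T hTirr hsemi
    constructor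
    · exact ⟨x, by rw [hS]; exact ⟨hx0, hxc⟩⟩
    · choose L hL1 hL2 using fun u v => List.exists_isChain_cons_of_relationReflTransGen (hconn u v)
      set B : ℕ := Finset.univ.sup (fun uv : Fin n × Fin n => (L uv.1 uv.2).length) with hBdef
      apply Bornology.IsBounded.subset
        (Metric.isBounded_closedBall (x := (0 : Fin n → ℝ)) (r := (B:ℝ)))
      intro z hz
      rw [hS] at hz
      obtain ⟨hz0, hzc⟩ := hz
      have hstep : ∀ p q : Fin n, T p q → z q < z p + 1 := by
        intro p q hpq
        have hne : p ≠ q := by rintro rfl; exact hTirr p hpq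
        rcases lt_or_gt_of_ne hne with h | h
        · have := (hzc p q h).1 hpq; linarith
        · have := (hzc q p h).2 hpq; linarith
      have hpair : ∀ u v : Fin n, z v ≤ z u + B := by
        intro u v
        have h1 := StmtAux.chain_bound T z hstep (L u v) u (hL1 u v)
        rw [hL2 u v] at h1
        have h2 : ((L u v).length : ℝ) ≤ (B:ℝ) := by
          exact_mod_cast Finset.le_sup
            (f := fun uv : Fin n × Fin n => (L uv.1 uv.2).length) (Finset.mem_univ (u, v))
        linarith
      have hcoord : ∀ i, |z i| ≤ (B:ℝ) := by
        intro i
        have hnpos : (0:ℝ) < n := by exact_mod_cast i.pos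
        have hup : (n:ℝ) * z i ≤ n * B := by
          calc (n:ℝ) * z i = ∑ _j : Fin n, z i := by
                rw [Finset.sum_const]; simp [nsmul_eq_mul]
            _ ≤ ∑ j : Fin n, (z j + B) := Finset.sum_le_sum (fun j _ => hpair j i)
            _ = (∑ j, z j) + n * B := by
                rw [Finset.sum_add_distrib, Finset.sum_const]; simp [nsmul_eq_mul]
            _ = n * B := by rw [hz0]; ring
        have hdown : -((n:ℝ) * B) ≤ n * z i := by
          have : ∑ j : Fin n, (z j - B) ≤ ∑ _j : Fin n, z i :=
            Finset.sum_le_sum (fun j _ => by have := hpair i j; linarith)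
          rw [Finset.sum_sub_distrib, Finset.sum_const, Finset.sum_const, hz0] at this
          simpa [nsmul_eq_mul] using this
        rw [abs_le]
        constructor
        · nlinarith
        · nlinarith
      rw [Metric.mem_closedBall]
      rw [dist_pi_le_iff (by positivity)]
      intro i
      simpa [Real.dist_eq] using hcoord i
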